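/- Let F, D* be invertible l×l diagonal matrices with I + D*(I-F) invertible, Q an m×l matrix with Q'Q = I_l, and ỹ ∈ ℝ^m, v ∈ ℝ^l. Define G = ‖ỹ‖² + v'D*⁻¹v - (Q'ỹ + D*⁻¹v)'(I+D*⁻¹)⁻¹F(Q'ỹ + D*⁻¹v). Then G = (ỹ - QF(I+D*(I-F))⁻¹v)'(I + QFD*(I+D*(I-F))⁻¹Q')⁻¹(ỹ - QF(I+D*(I-F))⁻¹v) + v'(D*+I)(I-F)D*⁻¹(I+D*(I-F))⁻¹v. -/

import Mathlib

open Matrix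

theorem quadratic_form_decomposition (l m : ℕ) (F Dstar : Matrix (Fin l) (Fin l) ℝ)
    (hF : F.IsDiag) (hD : Dstar.IsDiag)
    (hFunit : IsUnit F.det) (hDunit : IsUnit Dstar.det)
    (h1 : IsUnit (1 + Dstar * (1 - F)).det)
    (h2 : IsUnit (1 + Dstar⁻¹).det)
    (Q : Matrix (Fin m) (Fin l) ℝ) (hQ : Qᵀ * Q = 1)
    (ytilde : Fin m → ℝ) (v : Fin l → ℝ) :
    ytilde ⬝ᵥ ytilde + v ⬝ᵥ Dstar⁻¹.mulVec v -
        (Qᵀ.mulVec ytilde + Dstar⁻¹.mulVec v) ⬝ᵥ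
          ((1 + Dstar⁻¹)⁻¹ * F).mulVec (Qᵀ.mulVec ytilde + Dstar⁻¹.mulVec v) =
      (ytilde - (Q * F * (1 + Dstar * (1 - F))⁻¹).mulVec v) ⬝ᵥ
          ((1 + Q * F * Dstar * (1 + Dstar * (1 - F))⁻¹ * Qᵀ)⁻¹).mulVec
            (ytilde - (Q * F * (1 + Dstar * (1 - F))⁻¹).mulVec v) +
        v ⬝ᵥ ((Dstar + 1) * (1 - F) * Dstar⁻¹ * (1 + Dstar * (1 - F))⁻¹).mulVec v := by
  obtain ⟨f, rfl⟩ : ∃ f, F = diagonal f := ⟨F.diag, hF.diagonal_diag.symm⟩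
  obtain ⟨d, rfl⟩ : ∃ d, Dstar = diagonal d := ⟨Dstar.diag, hD.diagonal_diag.symm⟩
  clear hF hD
  -- entrywise nonvanishing facts
  have e1 : (1 : Matrix (Fin l) (Fin l) ℝ) + diagonal d * (1 - diagonal f)
      = diagonal (fun i => 1 + d i * (1 - f i)) := by
    rw [← diagonal_one, diagonal_sub, diagonal_mul_diagonal, diagonal_add]
  rw [e1] at h1
  rw [det_diagonal, isUnit_iff_ne_zero, Finset.prod_ne_zero_iff] at hDunit h1
  have hd0 : ∀ i, d i ≠ 0 := fun i => hDunit i (Finset.mem_univ i)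
  have h1i : ∀ i, 1 + d i * (1 - f i) ≠ 0 := fun i => h1 i (Finset.mem_univ i)
  -- diagonal inverses
  have hdiaginv : ∀ w : Fin l → ℝ, (∀ i, w i ≠ 0) →
      (diagonal w)⁻¹ = diagonal (fun i => (w i)⁻¹) := by
    intro w hw
    apply inv_eq_right_inv
    rw [diagonal_mul_diagonal]
    rw [show (fun i => w i * (w i)⁻¹) = fun _ => (1:ℝ) by
      funext i; exact mul_inv_cancel₀ (hw i)]
    exact diagonal_one
  have hDi : (diagonal d)⁻¹ = diagonal (fun i => (d i)⁻¹) := hdiaginv d hd0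
  have e2 : (1 : Matrix (Fin l) (Fin l) ℝ) + (diagonal d)⁻¹
      = diagonal (fun i => 1 + (d i)⁻¹) := by
    rw [hDi, ← diagonal_one, diagonal_add]
  rw [e2] at h2
  rw [det_diagonal, isUnit_iff_ne_zero, Finset.prod_ne_zero_iff] at h2
  have h2i : ∀ i, 1 + d i ≠ 0 := by
    intro i hc
    apply h2 i (Finset.mem_univ i)
    have hd : d i = -1 := by linarith
    rw [hd]; norm_num
  have h2i' : ∀ i, 1 + (d i)⁻¹ ≠ 0 := fun i => h2 i (Finset.mem_univ i)
  -- abbreviations for the diagonal entries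
  set e : Fin l → ℝ := fun i => (1 + d i * (1 - f i))⁻¹ with he
  set g : Fin l → ℝ := fun i => d i * f i / (1 + d i) with hg
  set s : Fin l → ℝ := fun i => (d i + 1) * (1 - f i) * (d i)⁻¹ * e i with hs
  have he0 : ∀ i, e i = (1 + d i * (1 - f i))⁻¹ := fun i => rfl
  have hg0 : ∀ i, g i = d i * f i / (1 + d i) := fun i => rfl
  have hs0 : ∀ i, s i = (d i + 1) * (1 - f i) * (d i)⁻¹ * e i := fun i => rfl
  -- rewrite matrix inverses as diagonals
  have hM : (1 + diagonal d * (1 - diagonal f))⁻¹ = diagonal e := by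
    rw [e1]; exact hdiaginv _ h1i
  have hA : (1 + (diagonal d)⁻¹)⁻¹ * diagonal f = diagonal g := by
    rw [e2, hdiaginv _ h2i', diagonal_mul_diagonal]
    rw [show (fun i => (1 + (d i)⁻¹)⁻¹ * f i) = g by
      funext i
      have hd' := hd0 i
      have h2' := h2i i
      rw [show 1 + (d i)⁻¹ = (1 + d i) / d i by field_simp; ring, inv_div, hg0]
      field_simp]
  have hS : (diagonal d + 1) * (1 - diagonal f) * (diagonal d)⁻¹
      * (1 + diagonal d * (1 - diagonal f))⁻¹ = diagonal s := by
    rw [hM, hDi, ← diagonal_one, diagonal_sub, diagonal_add, diagonal_mul_diagonal,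
      diagonal_mul_diagonal, diagonal_mul_diagonal]
  have hK : Q * diagonal f * (1 + diagonal d * (1 - diagonal f))⁻¹
      = Q * diagonal (fun i => f i * e i) := by
    rw [hM, Matrix.mul_assoc, diagonal_mul_diagonal]
  -- the Woodbury-type identity
  have hB : (1 + Q * diagonal f * diagonal d * (1 + diagonal d * (1 - diagonal f))⁻¹ * Qᵀ)⁻¹
      = 1 - Q * diagonal g * Qᵀ := by
    apply inv_eq_right_inv
    rw [hM]
    have hcc : Q * diagonal f * diagonal d * diagonal e
        = Q * diagonal (fun i => f i * d i * e i) := by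
      rw [Matrix.mul_assoc, Matrix.mul_assoc, diagonal_mul_diagonal, diagonal_mul_diagonal,
        show (fun i => f i * (d i * e i)) = fun i => f i * d i * e i from
          funext fun i => by ring]
    rw [hcc]
    have key : diagonal (fun i => f i * d i * e i) - diagonal g
        - diagonal (fun i => f i * d i * e i) * diagonal g = 0 := by
      rw [diagonal_mul_diagonal, diagonal_sub, diagonal_sub]
      rw [show (fun i => f i * d i * e i - g i - f i * d i * e i * g i) = fun _ => (0:ℝ) by
        funext i
        rw [hg0, he0]
        have h1' := h1i i
        have h2' := h2i i
        have hd' := hd0 i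
        field_simp
        ring]
      exact diagonal_zero
    have h5 : (Q * diagonal (fun i => f i * d i * e i) * Qᵀ) * (Q * diagonal g * Qᵀ)
        = Q * (diagonal (fun i => f i * d i * e i) * diagonal g) * Qᵀ := by
      simp only [Matrix.mul_assoc]
      rw [← Matrix.mul_assoc Qᵀ Q, hQ, Matrix.one_mul]
    have expand : ∀ X Y : Matrix (Fin m) (Fin m) ℝ, (1 + X) * (1 - Y) = 1 + (X - Y - X * Y) := by
      intro X Y; noncomm_ring
    rw [expand, h5, ← Matrix.sub_mul, ← Matrix.sub_mul, ← Matrix.mul_sub Q, ← Matrix.mul_sub Q,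
      key, Matrix.mul_zero, Matrix.zero_mul, add_zero]
  -- vector abbreviations
  set a : Fin l → ℝ := Qᵀ *ᵥ ytilde with ha
  set p : Fin l → ℝ := fun i => f i * e i * v i with hp
  set q : Fin l → ℝ := fun i => (d i)⁻¹ * v i with hq
  have hkv : diagonal (fun i => f i * e i) *ᵥ v = p := by
    funext i; rw [mulVec_diagonal]
  have hqv : diagonal (fun i => (d i)⁻¹) *ᵥ v = q := by
    funext i; rw [mulVec_diagonal]
  have hQ3 : ∀ x : Fin l → ℝ, Qᵀ *ᵥ (Q *ᵥ x) = x := by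
    intro x; rw [mulVec_mulVec, hQ, one_mulVec]
  have hQdot : ∀ (x : Fin m → ℝ) (w : Fin l → ℝ), x ⬝ᵥ (Q *ᵥ w) = (Qᵀ *ᵥ x) ⬝ᵥ w := by
    intro x w; rw [dotProduct_mulVec, ← mulVec_transpose]
  have hQdot' : ∀ (w : Fin l → ℝ) (x : Fin m → ℝ), (Q *ᵥ w) ⬝ᵥ x = w ⬝ᵥ (Qᵀ *ᵥ x) := by
    intro w x; rw [dotProduct_comm, hQdot, dotProduct_comm]
  -- rewrite goal
  rw [hA, hS, hB, hK, hDi, ← mulVec_mulVec, hkv, hqv]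
  have hw : (1 - Q * diagonal g * Qᵀ) *ᵥ (ytilde - Q *ᵥ p)
      = (ytilde - Q *ᵥ p) - Q *ᵥ (diagonal g *ᵥ (a - p)) := by
    rw [Matrix.sub_mulVec, Matrix.one_mulVec]
    congr 1
    rw [← mulVec_mulVec, ← mulVec_mulVec, Matrix.mulVec_sub, hQ3, ha]
  rw [hw]
  -- the key diagonal vector identity : G q = p - G p
  have hcross : diagonal g *ᵥ q = p - diagonal g *ᵥ p := by
    funext i
    simp only [Pi.sub_apply, mulVec_diagonal, hp, hq, hg0, he0]
    have h1' := h1i i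
    have h2' := h2i i
    have hd' := hd0 i
    field_simp
    ring
  -- the key diagonal scalar identity
  have hvterm : v ⬝ᵥ q - q ⬝ᵥ (diagonal g *ᵥ q)
      = p ⬝ᵥ p - p ⬝ᵥ (diagonal g *ᵥ p) + v ⬝ᵥ (diagonal s *ᵥ v) := by
    simp only [dotProduct, mulVec_diagonal, hp, hq, hg0, he0, hs0]
    rw [← Finset.sum_sub_distrib, ← Finset.sum_sub_distrib, ← Finset.sum_add_distrib]
    apply Finset.sum_congr rfl
    intro i _
    have h1' := h1i i
    have h2' := h2i i
    have hd' := hd0 i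
    field_simp
    ring
  -- symmetry of diagonal quadratic forms
  have hsym : ∀ (w x y : Fin l → ℝ), x ⬝ᵥ (diagonal w *ᵥ y) = y ⬝ᵥ (diagonal w *ᵥ x) := by
    intro w x y
    simp only [dotProduct, mulVec_diagonal]
    apply Finset.sum_congr rfl
    intro i _; ring
  -- expand everything bilinearly
  simp only [Matrix.mulVec_add, Matrix.mulVec_sub, dotProduct_add, add_dotProduct,
    dotProduct_sub, sub_dotProduct, hQdot, hQdot', hQ3, ← ha]
  rw [hcross, hsym g q a]
  rw [hcross]
  simp only [dotProduct_add, add_dotProduct, dotProduct_sub, sub_dotProduct]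
  rw [hsym g p a, dotProduct_comm p a]
  have hx1 : q ⬝ᵥ (diagonal g *ᵥ q) = q ⬝ᵥ p - q ⬝ᵥ (diagonal g *ᵥ p) := by
    rw [hcross, dotProduct_sub]
  linarith [hvterm, hx1]
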